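/- Let f be analytic on the unit disk E with f(0) = 0, f'(0) = 1, f(z) ≠ 0 for z ≠ 0, and suppose f is starlike, i.e. Re(z f'(z)/f(z)) > 0 on E. Define the Alexander-type operator F(z) = ∫₀^z f(t)/t dt. Then Re(z F'(z)/F(z)) > 1/2 for all z ∈ E, i.e. F is starlike of order 1/2. -/

import Mathlib

open Complex Metric

open Set Filter
open scoped Topology

lemma jack_aux {g : ℂ → ℂ} {z₀ : ℂ} {r : ℝ}
    (hg : ∀ z ∈ ball (0 : ℂ) 1, DifferentiableAt ℂ g z)
    (hg0 : g 0 = 0) (hr0 : 0 < r) (hr1 : r < 1) (hz₀ : ‖z₀‖ = r)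
    (hmax : ∀ z, ‖z‖ ≤ r → ‖g z‖ ≤ ‖g z₀‖)
    (hM : 1 ≤ ‖g z₀‖) :
    ∃ k : ℝ, 1 ≤ k ∧ z₀ * deriv g z₀ = k * g z₀ := by
  have hgz₀ : g z₀ ≠ 0 := by
    intro h; rw [h] at hM; simp at hM; linarith
  set φ : ℂ → ℂ := fun w => g (w * z₀) / g z₀ with hφdef
  have hz₀mem : z₀ ∈ ball (0:ℂ) 1 := by
    simp [mem_ball, Complex.dist_eq, hz₀]; linarith
  have hφdiff : ∀ w : ℂ, ‖w‖ ≤ 1 → DifferentiableAt ℂ φ w := by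
    intro w hw
    have h1 : ‖w * z₀‖ < 1 := by
      rw [norm_mul, hz₀]
      nlinarith [norm_nonneg w]
    have h2 : DifferentiableAt ℂ g (w * z₀) := hg _ (by simpa [mem_ball, Complex.dist_eq] using h1)
    exact (h2.comp w ((differentiableAt_id).mul_const z₀)).div_const _
  have hφle : ∀ w : ℂ, ‖w‖ ≤ 1 → ‖φ w‖ ≤ 1 := by
    intro w hw
    rw [hφdef]; simp only [norm_div]
    rw [div_le_one (by linarith)]
    exact hmax _ (by rw [norm_mul, hz₀]; nlinarith [norm_nonneg w])
  have hφ0 : φ 0 = 0 := by simp [hφdef, hg0]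
  have hφ1 : φ 1 = 1 := by simp [hφdef, div_self hgz₀]
  -- Schwarz
  have hschwarz : ∀ w : ℂ, ‖w‖ < 1 → ‖φ w‖ ≤ ‖w‖ := by
    intro w hw
    have key : ∀ ε : ℝ, 0 < ε → ‖φ w‖ ≤ (1 + ε) * ‖w‖ := by
      intro ε hε
      have hd : DifferentiableOn ℂ φ (ball 0 1) := fun z hz =>
        (hφdiff z (le_of_lt (by simpa [mem_ball, Complex.dist_eq] using hz))).differentiableWithinAt
      have hmaps : MapsTo φ (ball (0:ℂ) 1) (ball (φ 0) (1 + ε)) := by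
        intro z hz
        rw [hφ0, mem_ball, Complex.dist_eq, sub_zero]
        calc ‖φ z‖ ≤ 1 := hφle z (le_of_lt (by simpa [mem_ball, Complex.dist_eq] using hz))
        _ < 1 + ε := by linarith
      have := Complex.dist_le_div_mul_dist_of_mapsTo_ball hd (hmaps.mono_right ball_subset_closedBall)
        (show w ∈ ball (0:ℂ) 1 by simpa [mem_ball, Complex.dist_eq] using hw)
      simpa [hφ0, Complex.dist_eq, div_one] using this
    by_contra hcon
    push_neg at hcon
    have h0 : 0 < ‖w‖ := by
      rcases eq_or_lt_of_le (norm_nonneg w) with h | h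
      · exfalso; rw [← h] at hcon
        have : w = 0 := by
          have := norm_eq_zero.mp h.symm; exact this
        rw [this, hφ0] at hcon; simp at hcon
      · exact h
    have hkey := key ((‖φ w‖ - ‖w‖) / (2 * ‖w‖))
      (div_pos (by linarith) (by linarith))
    have heq : (1 + (‖φ w‖ - ‖w‖) / (2 * ‖w‖)) * ‖w‖
        = ‖w‖ + (‖φ w‖ - ‖w‖) / 2 := by
      field_simp
    rw [heq] at hkey; linarith
  -- the derivative of φ at 1
  set v : ℂ := z₀ * deriv g z₀ / g z₀ with hvdef
  have hφv : HasDerivAt φ v 1 := by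
    have hgd : HasDerivAt g (deriv g z₀) z₀ := (hg z₀ hz₀mem).hasDerivAt
    have h1 : HasDerivAt (fun w : ℂ => w * z₀) z₀ 1 := by
      simpa using (hasDerivAt_id (1:ℂ)).mul_const z₀
    have h2 : HasDerivAt (fun w => g (w * z₀)) (deriv g z₀ * z₀) 1 :=
      HasDerivAt.comp 1 (by simpa using hgd) h1
    have := h2.div_const (g z₀)
    rw [show v = deriv g z₀ * z₀ / g z₀ by rw [hvdef]; ring]; exact this
  -- real path derivative
  have hψ : HasDerivAt (fun t : ℝ => φ t) v 1 := by
    have := hφv.comp_ofReal (z := 1)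
    simpa using this
  have hre : HasDerivAt (fun t : ℝ => (φ t).re) v.re 1 :=
    (Complex.reCLM.hasFDerivAt.comp_hasDerivAt 1 hψ)
  have him : HasDerivAt (fun t : ℝ => (φ t).im) v.im 1 :=
    (Complex.imCLM.hasFDerivAt.comp_hasDerivAt 1 hψ)
  have hm : HasDerivAt (fun t : ℝ => Complex.normSq (φ t)) (2 * v.re) 1 := by
    have h := (hre.mul hre).add (him.mul him)
    rw [show ((1:ℝ):ℂ) = 1 from by norm_num, hφ1] at h
    simp only [Complex.one_re, Complex.one_im] at h
    have heq : (fun t : ℝ => Complex.normSq (φ t))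
        = fun t : ℝ => (φ t).re * (φ t).re + (φ t).im * (φ t).im := by
      funext t; simp [Complex.normSq_apply]
    rw [heq]
    refine h.congr_deriv ?_; ring
  -- lower bound on v.re
  have hvre : 1 ≤ v.re := by
    have hslope : Tendsto (slope (fun t : ℝ => Complex.normSq (φ t)) 1) (𝓝[<] (1:ℝ))
        (𝓝 (2 * v.re)) :=
      (hasDerivAt_iff_tendsto_slope.mp hm).mono_left
        (nhdsWithin_mono _ (fun x hx => ne_of_lt hx))
    have htend : Tendsto (fun t : ℝ => t + 1) (𝓝[<] (1:ℝ)) (𝓝 2) := by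
      have h2 : Tendsto (fun t : ℝ => t + 1) (𝓝 (1:ℝ)) (𝓝 (1 + 1)) :=
        (continuous_id.add continuous_const).tendsto (1:ℝ)
      norm_num at h2
      exact h2.mono_left nhdsWithin_le_nhds
    have hub : ∀ᶠ t in 𝓝[<] (1:ℝ), t + 1 ≤ slope (fun t : ℝ => Complex.normSq (φ t)) 1 t := by
      filter_upwards [Ioo_mem_nhdsLT_of_mem (show (1:ℝ) ∈ Ioc 0 1 by norm_num)] with t ht
      have ht0 : 0 < t := ht.1
      have ht1 : t < 1 := ht.2
      have hmt : Complex.normSq (φ t) ≤ t ^ 2 := by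
        have h1 : ‖φ t‖ ≤ t := by
          have := hschwarz (t : ℂ) (by simpa using abs_lt.mpr ⟨by linarith, ht1⟩)
          simpa [Complex.norm_real, Real.norm_eq_abs, abs_of_pos ht0] using this
        have := Complex.sq_norm (φ t)
        nlinarith [norm_nonneg (φ t)]
      have hm1 : Complex.normSq (φ ((1:ℝ):ℂ)) = 1 := by
        rw [Complex.ofReal_one, hφ1]; simp
      rw [slope_def_field, hm1, le_div_iff_of_neg (by linarith : t - (1:ℝ) < 0)]
      nlinarith
    have := le_of_tendsto_of_tendsto htend hslope hub
    linarith
  -- imaginary part of v is zero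
  have hvim : v.im = 0 := by
    have hc : HasDerivAt (fun θ : ℝ => (θ:ℂ) * I) (1 * I) 0 :=
      Complex.ofRealCLM.hasDerivAt.mul_const I
    have he : HasDerivAt (fun θ : ℝ => Complex.exp ((θ:ℂ) * I)) I 0 := by
      have := hc.cexp
      simpa using this
    have hφe : HasDerivAt (fun θ : ℝ => φ (Complex.exp ((θ:ℂ) * I))) (I * v) 0 := by
      have h1 : HasDerivAt φ v (Complex.exp ((0:ℝ) * I)) := by
        simpa using hφv
      have := HasDerivAt.scomp (0:ℝ) h1 he
      simp only [smul_eq_mul] at this; exact this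
    have hnre : HasDerivAt (fun θ : ℝ => (φ (Complex.exp ((θ:ℂ) * I))).re) (I * v).re 0 :=
      Complex.reCLM.hasFDerivAt.comp_hasDerivAt 0 hφe
    have hnim : HasDerivAt (fun θ : ℝ => (φ (Complex.exp ((θ:ℂ) * I))).im) (I * v).im 0 :=
      Complex.imCLM.hasFDerivAt.comp_hasDerivAt 0 hφe
    have hn : HasDerivAt (fun θ : ℝ => Complex.normSq (φ (Complex.exp ((θ:ℂ) * I))))
        (-(2 * v.im)) 0 := by
      have h := (hnre.mul hnre).add (hnim.mul hnim)
      rw [show Complex.exp (((0:ℝ):ℂ) * I) = 1 from by simp, hφ1] at h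
      simp only [Complex.one_re, Complex.one_im] at h
      have heq : (fun θ : ℝ => Complex.normSq (φ (Complex.exp ((θ:ℂ) * I))))
          = fun θ : ℝ => (φ (Complex.exp ((θ:ℂ) * I))).re * (φ (Complex.exp ((θ:ℂ) * I))).re
            + (φ (Complex.exp ((θ:ℂ) * I))).im * (φ (Complex.exp ((θ:ℂ) * I))).im := by
        funext θ; simp [Complex.normSq_apply]
      rw [heq]
      refine h.congr_deriv ?_
      simp [Complex.mul_re, Complex.I_re, Complex.I_im]
      ring
    have hlm : IsLocalMax (fun θ : ℝ => Complex.normSq (φ (Complex.exp ((θ:ℂ) * I)))) 0 := by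
      refine Filter.Eventually.of_forall (fun θ => ?_)
      have h1 : ‖Complex.exp ((θ:ℂ) * I)‖ = 1 := Complex.norm_exp_ofReal_mul_I θ
      have h2 : ‖φ (Complex.exp ((θ:ℂ) * I))‖ ≤ 1 := hφle _ (le_of_eq h1)
      have h3 : Complex.exp (((0:ℝ):ℂ) * I) = 1 := by simp
      simp only [h3, hφ1, Complex.normSq_one]
      rw [← Complex.sq_norm]
      nlinarith [norm_nonneg (φ (Complex.exp ((θ:ℂ) * I)))]
    have := hlm.hasDerivAt_eq_zero hn
    linarith
  refine ⟨v.re, hvre, ?_⟩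
  have hveq : (v.re : ℂ) = v := by
    apply Complex.ext <;> simp [hvim]
  calc z₀ * deriv g z₀ = v * g z₀ := by rw [hvdef]; field_simp
    _ = (v.re : ℂ) * g z₀ := by rw [hveq]

lemma dslope_analyticOnNhd {f : ℂ → ℂ} (hf : AnalyticOnNhd ℂ f (ball (0:ℂ) 1)) :
    AnalyticOnNhd ℂ (dslope f 0) (ball (0:ℂ) 1) := by
  intro z hz
  rcases eq_or_ne z 0 with rfl | hne
  · rcases hf 0 hz with ⟨p, hp⟩
    exact (hp.has_fpower_series_dslope_fslope).analyticAt
  · have h1 : AnalyticAt ℂ (fun w : ℂ => (f w - f 0) / (w - 0)) z :=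
      ((hf z hz).sub analyticAt_const).div (analyticAt_id.sub analyticAt_const)
        (sub_ne_zero.2 hne)
    apply h1.congr
    filter_upwards [isOpen_ne.mem_nhds hne] with w hw
    rw [dslope_of_ne _ hw, slope_def_field]

/-- The Alexander-type operator `F(z) = ∫₀^z f(t)/t dt` maps starlike functions to
functions starlike of order `1/2`. -/
theorem alexander_starlike_half (f F : ℂ → ℂ)
    (hf : AnalyticOn ℂ f (ball (0 : ℂ) 1))
    (hf0 : f 0 = 0) (hf'0 : deriv f 0 = 1)
    (hfne : ∀ z ∈ ball (0 : ℂ) 1, z ≠ 0 → f z ≠ 0)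
    (hstar : ∀ z ∈ ball (0 : ℂ) 1, z ≠ 0 → 0 < (z * deriv f z / f z).re)
    (hF : AnalyticOn ℂ F (ball (0 : ℂ) 1))
    (hF0 : F 0 = 0) (hF'0 : deriv F 0 = 1)
    (hF' : ∀ z ∈ ball (0 : ℂ) 1, z ≠ 0 → deriv F z = f z / z) :
    ∀ z ∈ ball (0 : ℂ) 1, z ≠ 0 → 1 / 2 < (z * deriv F z / F z).re := by
  have hball : IsOpen (ball (0:ℂ) 1) := isOpen_ball
  have hfo : AnalyticOnNhd ℂ f (ball 0 1) := hball.analyticOn_iff_analyticOnNhd.mp hf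
  have hFo : AnalyticOnNhd ℂ F (ball 0 1) := hball.analyticOn_iff_analyticOnNhd.mp hF
  set f₁ := dslope f 0 with hf₁def
  set F₁ := dslope F 0 with hF₁def
  have hf₁a := dslope_analyticOnNhd hfo
  have hF₁a := dslope_analyticOnNhd hFo
  have hf₁0 : f₁ 0 = 1 := by rw [hf₁def, dslope_same, hf'0]
  have hF₁0 : F₁ 0 = 1 := by rw [hF₁def, dslope_same, hF'0]
  have hf₁eq : ∀ z : ℂ, z ≠ 0 → f₁ z = f z / z := by
    intro z hz; rw [hf₁def, dslope_of_ne _ hz, slope_def_field, hf0, sub_zero, sub_zero]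
  have hF₁eq : ∀ z : ℂ, z ≠ 0 → F₁ z = F z / z := by
    intro z hz; rw [hF₁def, dslope_of_ne _ hz, slope_def_field, hF0, sub_zero, sub_zero]
  have hf₁ne : ∀ z ∈ ball (0:ℂ) 1, f₁ z ≠ 0 := by
    intro z hz
    rcases eq_or_ne z 0 with rfl | h
    · rw [hf₁0]; exact one_ne_zero
    · rw [hf₁eq z h]; exact div_ne_zero (hfne z hz h) h
  set g : ℂ → ℂ := fun z => F₁ z / f₁ z - 1 with hgdef
  have hgd : ∀ z ∈ ball (0:ℂ) 1, DifferentiableAt ℂ g z := fun z hz =>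
    (((hF₁a z hz).div (hf₁a z hz) (hf₁ne z hz)).sub analyticAt_const).differentiableAt
  have hg0 : g 0 = 0 := by rw [hgdef]; simp [hF₁0, hf₁0]
  have hgF : ∀ z ∈ ball (0:ℂ) 1, z ≠ 0 → g z = F z / f z - 1 := by
    intro z hz hne
    have hfz := hfne z hz hne
    rw [hgdef]; simp only
    rw [hf₁eq z hne, hF₁eq z hne]
    congr 1
    field_simp
  -- Main claim: |g| < 1 on the ball
  have key : ∀ z ∈ ball (0:ℂ) 1, ‖g z‖ < 1 := by
    by_contra hcon
    push_neg at hcon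
    obtain ⟨z₁, hz₁mem, hz₁⟩ := hcon
    have hz₁ne : z₁ ≠ 0 := by
      rintro rfl; rw [hg0] at hz₁; simp at hz₁; linarith
    set r := ‖z₁‖ with hrdef
    have hr0 : 0 < r := norm_pos_iff.mpr hz₁ne
    have hr1 : r < 1 := by simpa [mem_ball, Complex.dist_eq] using hz₁mem
    have hsub : closedBall (0:ℂ) r ⊆ ball (0:ℂ) 1 := by
      intro x hx
      rw [mem_closedBall, dist_zero_right] at hx
      rw [mem_ball, dist_zero_right]
      linarith
    have hdc : DiffContOnCl ℂ g (ball (0:ℂ) r) := by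
      constructor
      · exact fun z hz =>
          (hgd z (hsub (ball_subset_closedBall hz))).differentiableWithinAt
      · rw [closure_ball (0:ℂ) (ne_of_gt hr0)]
        exact fun z hz => (hgd z (hsub hz)).continuousAt.continuousWithinAt
    obtain ⟨z₀, hz₀f, hz₀max⟩ := Complex.exists_mem_frontier_isMaxOn_norm
      isBounded_ball ⟨0, mem_ball_self hr0⟩ hdc
    rw [frontier_ball (0:ℂ) (ne_of_gt hr0)] at hz₀f
    have hz₀abs : ‖z₀‖ = r := by
      simpa [Complex.dist_eq] using hz₀f
    rw [closure_ball (0:ℂ) (ne_of_gt hr0)] at hz₀max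
    have hmax' : ∀ z, ‖z‖ ≤ r → ‖g z‖ ≤ ‖g z₀‖ := by
      intro z hz
      have := hz₀max (show z ∈ closedBall (0:ℂ) r by
        rwa [mem_closedBall, dist_zero_right])
      simpa [Function.comp] using this
    have hM : 1 ≤ ‖g z₀‖ := le_trans hz₁ (hmax' z₁ (le_of_eq rfl))
    obtain ⟨k, hk1, hkeq⟩ := jack_aux hgd hg0 hr0 hr1 hz₀abs hmax' hM
    have hz₀ne : z₀ ≠ 0 := by
      intro h; rw [h] at hz₀abs; simp at hz₀abs; linarith
    have hz₀mem : z₀ ∈ ball (0:ℂ) 1 :=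
      hsub (by rw [mem_closedBall, dist_zero_right, hz₀abs])
    have hfz₀ : f z₀ ≠ 0 := hfne z₀ hz₀mem hz₀ne
    -- derivative of g at z₀
    have hFd : HasDerivAt F (f z₀ / z₀) z₀ := by
      have := (hFo z₀ hz₀mem).differentiableAt.hasDerivAt
      rwa [hF' z₀ hz₀mem hz₀ne] at this
    have hfd : HasDerivAt f (deriv f z₀) z₀ := (hfo z₀ hz₀mem).differentiableAt.hasDerivAt
    have hgat : HasDerivAt g
        ((f z₀ / z₀ * f z₀ - F z₀ * deriv f z₀) / (f z₀)^2) z₀ := by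
      have hd := (hFd.div hfd hfz₀).sub_const 1
      apply hd.congr_of_eventuallyEq
      have hU : IsOpen (ball (0:ℂ) 1 ∩ {w : ℂ | w ≠ 0}) := hball.inter isOpen_ne
      filter_upwards [hU.mem_nhds ⟨hz₀mem, hz₀ne⟩] with w hw
      exact hgF w hw.1 hw.2
    -- the differential equation
    set a := g z₀ with hadef
    set p := z₀ * deriv f z₀ / f z₀ with hpdef
    have hpre : 0 < p.re := hstar z₀ hz₀mem hz₀ne
    have hFfz : F z₀ / f z₀ = 1 + a := by
      rw [hadef, hgF z₀ hz₀mem hz₀ne]; ring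
    have hode : (k:ℂ) * a = 1 - p * (1 + a) := by
      have h1 : z₀ * deriv g z₀ = 1 - p * (F z₀ / f z₀) := by
        rw [hgat.deriv, hpdef]
        field_simp
      rw [hkeq, hFfz] at h1
      exact h1
    -- contradiction
    rcases eq_or_ne (1 + a) 0 with h1a | h1a
    · have ha : a = -1 := by linear_combination h1a
      rw [h1a, mul_zero, sub_zero, ha] at hode
      have hk : (k:ℝ) * (-1) = 1 := by
        have := congrArg Complex.re hode
        simpa using this
      linarith
    · have hN : 0 < Complex.normSq (1 + a) := Complex.normSq_pos.mpr h1a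
      have hpa : p * (1 + a) = 1 - (k:ℂ) * a := by linear_combination hode
      have hmc : p * (Complex.normSq (1 + a) : ℂ)
          = (1 - (k:ℂ) * a) * (starRingEnd ℂ) (1 + a) := by
        rw [← Complex.mul_conj]
        set c := (starRingEnd ℂ) (1 + a) with hcdef
        linear_combination c * hpa
      have hre := congrArg Complex.re hmc
      have hlhs : (p * (Complex.normSq (1 + a) : ℂ)).re = p.re * Complex.normSq (1 + a) := by
        simp [Complex.mul_re]
      have hrhs : ((1 - (k:ℂ) * a) * (starRingEnd ℂ) (1 + a)).re
          = 1 + (1 - k) * a.re - k * Complex.normSq a := by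
        simp [Complex.mul_re, Complex.sub_re, Complex.sub_im, Complex.add_re, Complex.add_im,
          Complex.one_re, Complex.one_im, Complex.conj_re, Complex.conj_im,
          Complex.ofReal_re, Complex.ofReal_im, Complex.normSq_apply]
        ring
      rw [hlhs, hrhs] at hre
      have hs2 : Complex.normSq a = (‖a‖)^2 := (Complex.sq_norm a).symm
      have hre_le : |a.re| ≤ ‖a‖ := Complex.abs_re_le_norm a
      have h1 : 1 + (1 - k) * a.re - k * Complex.normSq a ≤ 0 := by
        rw [hs2]
        set s := ‖a‖ with hsdef
        have h2 : -s ≤ a.re := neg_le_of_abs_le hre_le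
        nlinarith [mul_nonneg (sub_nonneg.2 hk1) (by linarith : (0:ℝ) ≤ a.re + s),
          mul_nonneg (by linarith : (0:ℝ) ≤ s - 1) (by nlinarith : (0:ℝ) ≤ k * s + 1)]
      nlinarith [mul_pos hpre hN]
  -- conclusion
  intro z hz hzne
  have hfz := hfne z hz hzne
  have hgz := key z hz
  rw [hgF z hz hzne] at hgz
  have hrw : z * deriv F z / F z = (F z / f z)⁻¹ := by
    rw [hF' z hz hzne, inv_div]
    congr 1
    field_simp
  rw [hrw, Complex.inv_re]
  set u := F z / f z with hudef
  have h1 : Complex.normSq (u - 1) < 1 := by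
    have h2 : ‖u - 1‖ < 1 := hgz
    rw [← Complex.sq_norm]
    nlinarith [norm_nonneg (u - 1)]
  have h2 : Complex.normSq u < 2 * u.re := by
    simp only [Complex.normSq_apply, Complex.sub_re, Complex.sub_im, Complex.one_re,
      Complex.one_im] at h1 ⊢
    nlinarith
  have hN : 0 < Complex.normSq u := by
    rcases lt_or_eq_of_le (Complex.normSq_nonneg u) with h | h
    · exact h
    · exfalso
      have hu0 : u = 0 := Complex.normSq_eq_zero.mp h.symm
      rw [hu0] at h2
      simp at h2
  rw [lt_div_iff₀ hN]
  linarith
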